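/- Let k ≥ 2 and let N be a nontrivial normal subgroup of the free group FreeGroup (Fin k) (N is Normal and N ≠ ⊥). Then N contains a nontrivial element of the commutator subgroup: there exists r with r ∈ N, r ∈ commutator (FreeGroup (Fin k)), and r ≠ 1. -/

import Mathlib

open FreeGroup in
private lemma fg_aux_chain_reduce {α : Type*} [DecidableEq α] (L : List (α × Bool))
    (h : List.Chain' (fun a b => ¬(b.1 = a.1 ∧ b.2 = !a.2)) L) : reduce L = L := by
  induction L with
  | nil => rfl
  | cons x L ih =>
    have hL : reduce L = L := ih h.tail
    rw [reduce.cons, hL]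
    cases L with
    | nil => rfl
    | cons y t =>
      have hxy : ¬(y.1 = x.1 ∧ y.2 = !x.2) := List.isChain_cons_cons.mp h |>.1
      simp only []
      rw [if_neg]
      rintro ⟨h1, h2⟩
      exact hxy ⟨h1.symm, by simp [h2]⟩

open FreeGroup in
private lemma fg_aux_reduce_chain {α : Type*} [DecidableEq α] (L : List (α × Bool))
    (h : reduce L = L) : List.Chain' (fun a b => ¬(b.1 = a.1 ∧ b.2 = !a.2)) L := by
  unfold List.Chain'
  rw [List.isChain_iff_getElem]
  intro i hi
  rintro ⟨h1, h2⟩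
  have hdecomp : L = L.take i ++ (L.get ⟨i, by omega⟩) ::
      (L.get ⟨i+1, by omega⟩) :: L.drop (i+2) := by
    conv_lhs => rw [← List.take_append_drop i L]
    congr 1
    rw [List.drop_eq_getElem_cons (by omega)]
    congr 1
    rw [List.drop_eq_getElem_cons (by omega)]
    simp
  set a := L.get ⟨i, by omega⟩
  set b := L.get ⟨i+1, by omega⟩
  have hb : b = (a.1, !a.2) := Prod.ext h1 h2
  rw [hb] at hdecomp
  rw [hdecomp] at h
  exact reduce.not h

open FreeGroup in
private lemma fg_aux_conj_ne {α : Type*} [DecidableEq α] (x : FreeGroup α) (hx : x ≠ 1)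
    (i : α) (hi : i ≠ ((x.toWord).getLast (by simpa [toWord_eq_nil_iff] using hx)).1) :
    x * of i * x⁻¹ ≠ of i := by
  set w := x.toWord with hw
  have hwne : w ≠ [] := by simpa [hw, toWord_eq_nil_iff] using hx
  have hred : reduce w = w := reduce_toWord x
  have hchain : List.Chain' (fun a b => ¬(b.1 = a.1 ∧ b.2 = !a.2)) w :=
    fg_aux_reduce_chain w hred
  -- the big word
  set W := w ++ (i, true) :: invRev w with hW
  -- chain for invRev w
  have hchain_inv : List.Chain' (fun a b => ¬(b.1 = a.1 ∧ b.2 = !a.2)) (invRev w) := by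
    unfold List.Chain'
    rw [invRev, List.isChain_reverse, List.isChain_map]
    refine hchain.imp ?_
    rintro a b hab ⟨h1, h2⟩
    simp only [Bool.not_not] at h1 h2
    exact hab ⟨h1.symm, by simp [h2]⟩
  have hlast : (w.getLast hwne).1 ≠ i := fun h => hi h.symm
  have hheadinv : ∀ c ∈ (invRev w).head?, ¬(c.1 = i ∧ c.2 = !true) := by
    intro c hc
    have : (invRev w).head? = some ((w.getLast hwne).1, !(w.getLast hwne).2) := by
      rw [invRev, List.head?_reverse,
        List.getLast?_eq_getLast (by simpa using hwne), List.getLast_map]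
    rw [this] at hc
    rintro ⟨h1, _⟩
    rw [Option.mem_def, Option.some_inj] at hc
    rw [← hc] at h1
    exact hlast h1
  have hchainW : List.Chain' (fun a b => ¬(b.1 = a.1 ∧ b.2 = !a.2)) W := by
    unfold List.Chain'
    rw [hW, List.isChain_append]
    refine ⟨hchain, ?_, ?_⟩
    · rw [List.isChain_cons]
      exact ⟨hheadinv, hchain_inv⟩
    · intro a ha b hb
      rw [List.getLast?_eq_getLast hwne, Option.mem_def, Option.some_inj] at ha
      simp only [List.head?_cons, Option.mem_def, Option.some_inj] at hb
      rintro ⟨h1, _⟩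
      rw [← hb, ← ha] at h1
      exact hlast h1.symm
  have hmk : x * of i * x⁻¹ = mk W := by
    have hx' : x = mk w := (mk_toWord).symm
    rw [hx', of, inv_mk, mul_mk, mul_mk, hW]
    simp
  have hWword : (x * of i * x⁻¹).toWord = W := by
    rw [hmk, toWord_mk, fg_aux_chain_reduce W hchainW]
  intro h
  have := congrArg (fun z => z.toWord.length) h
  simp only [hWword, toWord_of] at this
  have hlen : W.length = 2 * w.length + 1 := by
    simp [hW, invRev_length]; ring
  rw [hlen] at this
  simp only [List.length_cons, List.length_nil] at this
  have : w.length = 0 := by omega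
  exact hwne (List.eq_nil_of_length_eq_zero this)

open scoped commutatorElement

/-- Every nontrivial normal subgroup of the free group on `k ≥ 2` generators contains a
nontrivial element of the commutator subgroup. -/
theorem normal_subgroup_meets_commutator (k : ℕ) (hk : 2 ≤ k)
    (N : Subgroup (FreeGroup (Fin k))) [N.Normal] (hN : N ≠ ⊥) :
    ∃ r : FreeGroup (Fin k), r ∈ N ∧ r ∈ commutator (FreeGroup (Fin k)) ∧ r ≠ 1 := by
  obtain ⟨⟨x, hxN⟩, hx1⟩ := Subgroup.ne_bot_iff_exists_ne_one.mp hN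
  have hx : x ≠ 1 := by
    intro h
    exact hx1 (Subtype.ext (by simpa using h))
  have hwne : x.toWord ≠ [] := by simpa [FreeGroup.toWord_eq_nil_iff] using hx
  set j := (x.toWord.getLast hwne).1 with hj
  have : Fintype.card (Fin k) = k := Fintype.card_fin k
  obtain ⟨i, hij⟩ := Fintype.exists_ne_of_one_lt_card (by omega) j
  refine ⟨⁅x, FreeGroup.of i⁆, ?_, ?_, ?_⟩
  · have h1 : FreeGroup.of i * x⁻¹ * (FreeGroup.of i)⁻¹ ∈ N :=
      Subgroup.Normal.conj_mem ‹N.Normal› x⁻¹ (inv_mem hxN) (FreeGroup.of i)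
    have : ⁅x, FreeGroup.of i⁆ = x * (FreeGroup.of i * x⁻¹ * (FreeGroup.of i)⁻¹) := by
      rw [commutatorElement_def]; group
    rw [this]
    exact mul_mem hxN h1
  · exact Subgroup.commutator_mem_commutator (Subgroup.mem_top x) (Subgroup.mem_top _)
  · intro h
    have := fg_aux_conj_ne x hx i hij
    apply this
    have : x * FreeGroup.of i * x⁻¹ * (FreeGroup.of i)⁻¹ = 1 := by
      rw [← h, commutatorElement_def]
    calc x * FreeGroup.of i * x⁻¹
        = x * FreeGroup.of i * x⁻¹ * (FreeGroup.of i)⁻¹ * FreeGroup.of i := by group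
      _ = FreeGroup.of i := by rw [this]; group
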